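/- arXiv:2408.00807 — 2 statements merged into one kernel-verified Lean document; each statement's English description precedes it below -/
import Mathlib

section
/- For all positive integers n and m, and q with 0 < q < 1, the sum over i from 1 to n of q^{i(m-1)}/(1 - q^i)^m equals the sum over r from 1 to n of [n choose r]_q · (-1)^{r-1} q^{binom(r,2) - r n} times the multiple sum over chains r = i_1 ≥ i_2 ≥ ... ≥ i_m ≥ 1 of the product over j of q^{i_j}/(1 - q^{i_j}) (Prodinger's identity). -/
noncomputable def qPoch (q a : ℝ) (n : ℕ) : ℝ := ∏ j ∈ Finset.range n, (1 - a * q ^ j)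

noncomputable def qBinom (q : ℝ) (n r : ℕ) : ℝ :=
  if r ≤ n then qPoch q q n / (qPoch q q r * qPoch q q (n - r)) else 0

lemma onesub_pos {q : ℝ} (hq0 : 0 < q) (hq1 : q < 1) (k : ℕ) (hk : 1 ≤ k) :
    0 < 1 - q ^ k :=
  sub_pos.mpr (pow_lt_one₀ hq0.le hq1 (by omega))

lemma onesub_ne {q : ℝ} (hq0 : 0 < q) (hq1 : q < 1) (k : ℕ) (hk : 1 ≤ k) :
    (1 : ℝ) - q ^ k ≠ 0 :=
  (onesub_pos hq0 hq1 k hk).ne'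

lemma qPoch_succ (q : ℝ) (n : ℕ) : qPoch q q (n + 1) = qPoch q q n * (1 - q ^ (n + 1)) := by
  rw [qPoch, Finset.prod_range_succ, ← pow_succ']
  rfl

lemma qPoch_pos {q : ℝ} (hq0 : 0 < q) (hq1 : q < 1) (n : ℕ) : 0 < qPoch q q n := by
  induction n with
  | zero => simp [qPoch]
  | succ n ih => rw [qPoch_succ]; exact mul_pos ih (onesub_pos hq0 hq1 _ (by omega))

lemma qPoch_ne {q : ℝ} (hq0 : 0 < q) (hq1 : q < 1) (n : ℕ) : qPoch q q n ≠ 0 :=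
  (qPoch_pos hq0 hq1 n).ne'

lemma qBinom_zero {q : ℝ} (hq0 : 0 < q) (hq1 : q < 1) (n : ℕ) : qBinom q n 0 = 1 := by
  simp only [qBinom, Nat.zero_le, if_true, Nat.sub_zero]
  rw [show qPoch q q 0 = 1 by simp [qPoch], one_mul, div_self (qPoch_ne hq0 hq1 n)]

lemma qBinom_self {q : ℝ} (hq0 : 0 < q) (hq1 : q < 1) (n : ℕ) : qBinom q n n = 1 := by
  simp only [qBinom, le_refl, if_true, Nat.sub_self]
  rw [show qPoch q q 0 = 1 by simp [qPoch], mul_one, div_self (qPoch_ne hq0 hq1 n)]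

lemma qBinom_eq_zero {q : ℝ} {n r : ℕ} (h : n < r) : qBinom q n r = 0 := by
  simp [qBinom, Nat.not_le.mpr h]

lemma qBinom_def {q : ℝ} {n r : ℕ} (h : r ≤ n) :
    qBinom q n r = qPoch q q n / (qPoch q q r * qPoch q q (n - r)) := if_pos h

/-- Pascal A: [n+1, r] = [n, r-1] + q^r [n, r]  (r = j+1) -/
lemma qBinom_pascalA {q : ℝ} (hq0 : 0 < q) (hq1 : q < 1) (n j : ℕ) :
    qBinom q (n + 1) (j + 1) = qBinom q n j + q ^ (j + 1) * qBinom q n (j + 1) := by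
  rcases lt_trichotomy j n with h | h | h
  · obtain ⟨a, rfl⟩ : ∃ a, n = j + 1 + a := ⟨n - j - 1, by omega⟩
    rw [qBinom_def (by omega), qBinom_def (by omega), qBinom_def (by omega),
      show j + 1 + a + 1 - (j + 1) = a + 1 by omega,
      show j + 1 + a - j = a + 1 by omega,
      show j + 1 + a - (j + 1) = a by omega,
      show j + 1 + a + 1 = (j + 1 + a) + 1 by omega, qPoch_succ, qPoch_succ, qPoch_succ]
    have hPj := qPoch_ne hq0 hq1 j
    have hPa := qPoch_ne hq0 hq1 a
    have h1 := onesub_ne hq0 hq1 (j + 1) (by omega)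
    have h2 := onesub_ne hq0 hq1 (a + 1) (by omega)
    field_simp
    ring
  · subst h
    rw [qBinom_self hq0 hq1, qBinom_self hq0 hq1, qBinom_eq_zero (by omega), mul_zero, add_zero]
  · rw [qBinom_eq_zero (by omega), qBinom_eq_zero (by omega), qBinom_eq_zero (by omega)]
    ring

/-- Pascal B: [n+1, r] = q^(n+1-r) [n, r-1] + [n, r]  (r = j+1) -/
lemma qBinom_pascalB {q : ℝ} (hq0 : 0 < q) (hq1 : q < 1) (n j : ℕ) (h : j ≤ n) :
    qBinom q (n + 1) (j + 1) = q ^ (n - j) * qBinom q n j + qBinom q n (j + 1) := by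
  rcases lt_or_eq_of_le h with h | h
  · obtain ⟨a, rfl⟩ : ∃ a, n = j + 1 + a := ⟨n - j - 1, by omega⟩
    rw [qBinom_def (by omega), qBinom_def (by omega), qBinom_def (by omega),
      show j + 1 + a + 1 - (j + 1) = a + 1 by omega,
      show j + 1 + a - j = a + 1 by omega,
      show j + 1 + a - (j + 1) = a by omega,
      show j + 1 + a + 1 = (j + 1 + a) + 1 by omega, qPoch_succ, qPoch_succ, qPoch_succ]
    have hPj := qPoch_ne hq0 hq1 j
    have hPa := qPoch_ne hq0 hq1 a
    have h1 := onesub_ne hq0 hq1 (j + 1) (by omega)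
    have h2 := onesub_ne hq0 hq1 (a + 1) (by omega)
    field_simp
    ring
  · subst h
    rw [qBinom_self hq0 hq1, qBinom_self hq0 hq1, qBinom_eq_zero (by omega), Nat.sub_self]
    norm_num

/-- absorption: (1-q^k) [n+1, k] = (1-q^(n+1)) [n, k-1]  (k = j+1) -/
lemma qBinom_absorb {q : ℝ} (hq0 : 0 < q) (hq1 : q < 1) (n j : ℕ) :
    (1 - q ^ (j + 1)) * qBinom q (n + 1) (j + 1) = (1 - q ^ (n + 1)) * qBinom q n j := by
  rcases le_or_gt j n with h | h
  · obtain ⟨a, rfl⟩ : ∃ a, n = j + a := ⟨n - j, by omega⟩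
    rw [qBinom_def (by omega), qBinom_def (by omega),
      show j + a + 1 - (j + 1) = a by omega,
      show j + a - j = a by omega,
      show j + a + 1 = (j + a) + 1 by omega, qPoch_succ, qPoch_succ]
    have hPj := qPoch_ne hq0 hq1 j
    have hPa := qPoch_ne hq0 hq1 a
    have hPja := qPoch_ne hq0 hq1 (j + a)
    have h1 := onesub_ne hq0 hq1 (j + 1) (by omega)
    field_simp
  · rw [qBinom_eq_zero (by omega), qBinom_eq_zero (by omega)]
    ring

/-- composition: [n,s][s,k] = [n,k][n-k, s-k]  for k ≤ s ≤ n -/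
lemma qBinom_comp {q : ℝ} (hq0 : 0 < q) (hq1 : q < 1) {n s k : ℕ} (h1 : k ≤ s) (h2 : s ≤ n) :
    qBinom q n s * qBinom q s k = qBinom q n k * qBinom q (n - k) (s - k) := by
  rw [qBinom_def h2, qBinom_def h1, qBinom_def (h1.trans h2), qBinom_def (by omega),
    show n - k - (s - k) = n - s by omega]
  have A := qPoch_ne hq0 hq1 (n - s)
  have B := qPoch_ne hq0 hq1 (s - k)
  have C := qPoch_ne hq0 hq1 k
  have D := qPoch_ne hq0 hq1 s
  have E := qPoch_ne hq0 hq1 (n - k)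
  field_simp

def Eh (r : ℕ) : ℕ := r * (r - 1) / 2

lemma twoEh (r : ℕ) : 2 * Eh r = r * (r - 1) := by
  cases r with
  | zero => simp [Eh]
  | succ s =>
    have hdvd : 2 ∣ (s + 1) * ((s + 1) - 1) := by
      simp only [Nat.add_sub_cancel]
      rcases Nat.even_or_odd s with h | h
      · exact Dvd.dvd.mul_left h.two_dvd _
      · exact Dvd.dvd.mul_right (Odd.add_one h).two_dvd _
    exact Nat.mul_div_cancel' hdvd

lemma Eh_succ (r : ℕ) : Eh (r + 1) = Eh r + r := by
  have h1 := twoEh r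
  have h2 := twoEh (r + 1)
  simp only [Nat.add_sub_cancel] at h2
  have h3 : (r + 1) * r = r * (r - 1) + 2 * r := by
    cases r with
    | zero => norm_num
    | succ s => simp only [Nat.add_sub_cancel]; ring
  linarith

lemma Eh_add (j u : ℕ) : Eh (j + u) = Eh j + j * u + Eh u := by
  induction u with
  | zero => simp [show Eh 0 = 0 from rfl]
  | succ u ih =>
    rw [show j + (u + 1) = (j + u) + 1 from rfl, Eh_succ, ih, Eh_succ]
    ring

lemma qbinthm {q : ℝ} (hq0 : 0 < q) (hq1 : q < 1) (n : ℕ) :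
    ∀ t : ℝ, ∑ r ∈ Finset.range (n + 1), qBinom q n r * q ^ Eh r * t ^ r
      = ∏ j ∈ Finset.range n, (1 + t * q ^ j) := by
  induction n with
  | zero => intro t; simp [qBinom_self hq0 hq1, show Eh 0 = 0 from rfl]
  | succ n ih =>
    intro t
    rw [Finset.sum_range_succ']
    have h0 : qBinom q (n + 1) 0 * q ^ Eh 0 * t ^ 0 = 1 := by
      simp [qBinom_zero hq0 hq1, Eh]
    rw [h0]
    have hterm : ∀ i, qBinom q (n + 1) (i + 1) * q ^ Eh (i + 1) * t ^ (i + 1)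
        = t * (qBinom q n i * q ^ Eh i * (q * t) ^ i)
          + (qBinom q n (i + 1) * q ^ Eh (i + 1) * (q * t) ^ (i + 1)) := by
      intro i
      rw [qBinom_pascalA hq0 hq1 n i, Eh_succ]
      ring
    rw [Finset.sum_congr rfl fun i _ => hterm i, Finset.sum_add_distrib, ← Finset.mul_sum]
    have h2 : ∑ i ∈ Finset.range (n + 1),
        qBinom q n (i + 1) * q ^ Eh (i + 1) * (q * t) ^ (i + 1)
        = ∑ r ∈ Finset.range (n + 1), qBinom q n r * q ^ Eh r * (q * t) ^ r - 1 := by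
      rw [Finset.sum_range_succ' (fun r => qBinom q n r * q ^ Eh r * (q * t) ^ r) n]
      have : qBinom q n 0 * q ^ Eh 0 * (q * t) ^ 0 = 1 := by
        simp [qBinom_zero hq0 hq1, Eh]
      rw [this]
      have hz : qBinom q n (n + 1) * q ^ Eh (n + 1) * (q * t) ^ (n + 1) = 0 := by
        rw [qBinom_eq_zero (by omega)]; ring
      rw [Finset.sum_range_succ, hz]
      ring
    rw [h2, ih (q * t)]
    rw [Finset.prod_range_succ' (fun j => 1 + t * q ^ j) n]
    have : ∀ j, 1 + t * q ^ (j + 1) = 1 + q * t * q ^ j := by intro j; ring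
    rw [Finset.prod_congr rfl fun j _ => this j]
    ring

lemma hockey {q : ℝ} (hq0 : 0 < q) (hq1 : q < 1) (j : ℕ) :
    ∀ n : ℕ, ∑ i ∈ Finset.Icc (j + 1) n, q ^ i / (1 - q ^ i) * qBinom q i (j + 1)
      = q ^ (j + 1) / (1 - q ^ (j + 1)) * qBinom q n (j + 1) := by
  intro n
  induction n with
  | zero =>
    rw [Finset.Icc_eq_empty (by omega), Finset.sum_empty, qBinom_eq_zero (by omega), mul_zero]
  | succ n ih =>
    rcases le_or_gt (j + 1) (n + 1) with h | h
    · rw [Finset.sum_Icc_succ_top h, ih]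
      obtain ⟨a, rfl⟩ : ∃ a, n = j + a := ⟨n - j, by omega⟩
      have habs := qBinom_absorb hq0 hq1 (j + a) j
      have h1 := onesub_ne hq0 hq1 (j + 1) (by omega)
      have h2 := onesub_ne hq0 hq1 (j + a + 1) (by omega)
      have hp := qBinom_pascalB hq0 hq1 (j + a) j (by omega)
      rw [show j + a - j = a by omega] at hp
      have hB1 : qBinom q (j + a) (j + 1)
          = qBinom q (j + a + 1) (j + 1) - q ^ a * qBinom q (j + a) j := by linarith
      have hB : qBinom q (j + a + 1) (j + 1)
          = (1 - q ^ (j + a + 1)) * qBinom q (j + a) j / (1 - q ^ (j + 1)) := by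
        field_simp
        linarith [habs]
      rw [hB1, hB]
      field_simp
      ring
    · rw [Finset.Icc_eq_empty (by omega), Finset.sum_empty,
        qBinom_eq_zero (by omega), mul_zero]

lemma sum_triangle (f : ℕ → ℕ → ℝ) :
    ∀ n : ℕ, ∑ i ∈ Finset.Icc 1 n, ∑ k ∈ Finset.Icc 1 i, f i k
      = ∑ k ∈ Finset.Icc 1 n, ∑ i ∈ Finset.Icc k n, f i k := by
  intro n
  induction n with
  | zero => simp
  | succ n ih =>
    rw [Finset.sum_Icc_succ_top (by omega : 1 ≤ n + 1), ih]
    have hsplit : ∀ k ∈ Finset.Icc 1 (n + 1),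
        ∑ i ∈ Finset.Icc k (n + 1), f i k = (∑ i ∈ Finset.Icc k n, f i k) + f (n + 1) k := by
      intro k hk
      rw [Finset.mem_Icc] at hk
      exact Finset.sum_Icc_succ_top (by omega) _
    rw [Finset.sum_congr rfl hsplit, Finset.sum_add_distrib]
    congr 1
    rw [Finset.sum_Icc_succ_top (by omega : 1 ≤ n + 1),
      Finset.Icc_eq_empty (by omega : ¬ (n + 1 ≤ n)), Finset.sum_empty, add_zero]

/-- Multiple sum over chains `top ≥ i₁ ≥ ⋯ ≥ i_m ≥ 1` of `∏ q^{i_j}/(1-q^{i_j})`. -/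
noncomputable def dSum (q : ℝ) : ℕ → ℕ → ℝ
  | 0, _ => 1
  | m + 1, top => ∑ i ∈ Finset.Icc 1 top, q ^ i / (1 - q ^ i) * dSum q m i

lemma dilcher {q : ℝ} (hq0 : 0 < q) (hq1 : q < 1) :
    ∀ (m n : ℕ), 1 ≤ n → dSum q m n
      = ∑ k ∈ Finset.Icc 1 n,
          qBinom q n k * (-1) ^ (k - 1) * q ^ Eh k * (q ^ k / (1 - q ^ k)) ^ m := by
  intro m
  induction m with
  | zero =>
    intro n hn
    have h := qbinthm hq0 hq1 n (-1)
    have hprod : ∏ j ∈ Finset.range n, (1 + (-1 : ℝ) * q ^ j) = 0 :=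
      Finset.prod_eq_zero (Finset.mem_range.mpr hn) (by norm_num)
    rw [hprod, Finset.sum_range_succ'] at h
    rw [qBinom_zero hq0 hq1] at h
    simp only [show Eh 0 = 0 from rfl, pow_zero, mul_one, one_mul] at h
    show (1 : ℝ) = _
    rw [← Finset.Ico_add_one_right_eq_Icc, Finset.sum_Ico_eq_sum_range]
    simp only [show n + 1 - 1 = n from rfl]
    have hterm : ∀ i ∈ Finset.range n,
        qBinom q n (1 + i) * (-1 : ℝ) ^ (1 + i - 1) * q ^ Eh (1 + i)
            * (q ^ (1 + i) / (1 - q ^ (1 + i))) ^ (0 : ℕ)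
          = -(qBinom q n (i + 1) * q ^ Eh (i + 1) * (-1) ^ (i + 1)) := by
      intro i _
      rw [show 1 + i = i + 1 by omega, Nat.add_sub_cancel, pow_zero, pow_succ]
      ring
    rw [Finset.sum_congr rfl hterm, Finset.sum_neg_distrib]
    linarith
  | succ m ih =>
    intro n hn
    show (∑ i ∈ Finset.Icc 1 n, q ^ i / (1 - q ^ i) * dSum q m i) = _
    have h1 : ∀ i ∈ Finset.Icc 1 n, q ^ i / (1 - q ^ i) * dSum q m i
        = ∑ k ∈ Finset.Icc 1 i,
            q ^ i / (1 - q ^ i)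
              * (qBinom q i k * (-1) ^ (k - 1) * q ^ Eh k * (q ^ k / (1 - q ^ k)) ^ m) := by
      intro i hi
      rw [Finset.mem_Icc] at hi
      rw [ih i hi.1, Finset.mul_sum]
    rw [Finset.sum_congr rfl h1, sum_triangle]
    refine Finset.sum_congr rfl fun k hk => ?_
    rw [Finset.mem_Icc] at hk
    obtain ⟨j, rfl⟩ : ∃ j, k = j + 1 := ⟨k - 1, by omega⟩
    have h2 : ∀ i ∈ Finset.Icc (j + 1) n,
        q ^ i / (1 - q ^ i)
            * (qBinom q i (j + 1) * (-1) ^ (j + 1 - 1) * q ^ Eh (j + 1)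
              * (q ^ (j + 1) / (1 - q ^ (j + 1))) ^ m)
          = (q ^ i / (1 - q ^ i) * qBinom q i (j + 1))
            * ((-1) ^ (j + 1 - 1) * q ^ Eh (j + 1)
              * (q ^ (j + 1) / (1 - q ^ (j + 1))) ^ m) := by
      intro i _; ring
    rw [Finset.sum_congr rfl h2, ← Finset.sum_mul, hockey hq0 hq1 j n]
    rw [pow_succ]
    ring

lemma lemT {q : ℝ} (hq0 : 0 < q) (hq1 : q < 1) (j : ℕ) (n : ℕ) (hn : j + 1 ≤ n) :
    ∑ r ∈ Finset.Icc (j + 1) n,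
        (-1 : ℝ) ^ r * qBinom q n r * qBinom q r (j + 1)
          * q ^ ((Eh r : ℤ) - r * n + r) / (1 - q ^ r)
      = (-1 : ℝ) ^ (j + 1) * q ^ (-(Eh (j + 1) : ℤ)) / (1 - q ^ (j + 1)) := by
  have hqne : q ≠ 0 := ne_of_gt hq0
  induction n, hn using Nat.le_induction with
  | base =>
    rw [Finset.Icc_self, Finset.sum_singleton, qBinom_self hq0 hq1]
    have hpow : q ^ ((Eh (j + 1) : ℤ) - ((j + 1 : ℕ) : ℤ) * ((j + 1 : ℕ) : ℤ) + ((j + 1 : ℕ) : ℤ))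
        = q ^ (-(Eh (j + 1) : ℤ)) := by
      congr 1
      have h2 : 2 * Eh (j + 1) = (j + 1) * j := by
        have := twoEh (j + 1); simpa using this
      have h2' : (2 : ℤ) * (Eh (j + 1) : ℤ) = ((j : ℤ) + 1) * j := by exact_mod_cast h2
      push_cast
      nlinarith [h2']
    rw [hpow]
    ring
  | succ n hn ih =>
    have hsplitg : ∀ r ∈ Finset.Icc (j + 1) (n + 1),
        (-1 : ℝ) ^ r * qBinom q (n + 1) r * qBinom q r (j + 1)
            * q ^ ((Eh r : ℤ) - (r : ℤ) * ((n + 1 : ℕ) : ℤ) + (r : ℤ)) / (1 - q ^ r)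
          = (-1 : ℝ) ^ r * qBinom q n r * qBinom q r (j + 1)
              * q ^ ((Eh r : ℤ) - (r : ℤ) * ((n : ℕ) : ℤ) + (r : ℤ)) / (1 - q ^ r)
            + (-1 : ℝ) ^ r * qBinom q n (r - 1) * qBinom q r (j + 1)
              * q ^ ((Eh r : ℤ) - (r : ℤ) * ((n + 1 : ℕ) : ℤ) + (r : ℤ)) / (1 - q ^ r) := by
      intro r hr
      rw [Finset.mem_Icc] at hr
      obtain ⟨s, rfl⟩ : ∃ s, r = s + 1 := ⟨r - 1, by omega⟩
      rw [qBinom_pascalA hq0 hq1 n s, Nat.add_sub_cancel]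
      have hpow : q ^ ((Eh (s + 1) : ℤ) - ((s + 1 : ℕ) : ℤ) * ((n + 1 : ℕ) : ℤ)
            + ((s + 1 : ℕ) : ℤ)) * q ^ (s + 1)
          = q ^ ((Eh (s + 1) : ℤ) - ((s + 1 : ℕ) : ℤ) * ((n : ℕ) : ℤ) + ((s + 1 : ℕ) : ℤ)) := by
        rw [← zpow_natCast q (s + 1), ← zpow_add₀ hqne]
        congr 1
        push_cast
        ring
      rw [← hpow]
      ring
    rw [Finset.sum_congr rfl hsplitg, Finset.sum_add_distrib]
    have h1 : ∑ r ∈ Finset.Icc (j + 1) (n + 1),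
        (-1 : ℝ) ^ r * qBinom q n r * qBinom q r (j + 1)
            * q ^ ((Eh r : ℤ) - (r : ℤ) * ((n : ℕ) : ℤ) + (r : ℤ)) / (1 - q ^ r)
        = ∑ r ∈ Finset.Icc (j + 1) n,
            (-1 : ℝ) ^ r * qBinom q n r * qBinom q r (j + 1)
              * q ^ ((Eh r : ℤ) - (r : ℤ) * ((n : ℕ) : ℤ) + (r : ℤ)) / (1 - q ^ r) := by
      rw [Finset.sum_Icc_succ_top (by omega : j + 1 ≤ n + 1),
        qBinom_eq_zero (show n < n + 1 by omega)]
      ring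
    rw [h1, ih]
    have hdelta : ∑ r ∈ Finset.Icc (j + 1) (n + 1),
        (-1 : ℝ) ^ r * qBinom q n (r - 1) * qBinom q r (j + 1)
          * q ^ ((Eh r : ℤ) - (r : ℤ) * ((n + 1 : ℕ) : ℤ) + (r : ℤ)) / (1 - q ^ r) = 0 := by
      rw [← Finset.Ico_add_one_right_eq_Icc, Finset.sum_Ico_eq_sum_range,
        show n + 1 + 1 - (j + 1) = n - j + 1 by omega]
      -- q-binomial theorem input
      have hqb := qbinthm hq0 hq1 (n - j) (-(q ^ ((j : ℤ) + 1 - (n : ℤ))))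
      have hprod0 : ∏ v ∈ Finset.range (n - j),
          (1 + -(q ^ ((j : ℤ) + 1 - (n : ℤ))) * q ^ v) = 0 := by
        apply Finset.prod_eq_zero (i := n - j - 1) (Finset.mem_range.mpr (by omega))
        have hone : q ^ ((j : ℤ) + 1 - (n : ℤ)) * q ^ (n - j - 1) = 1 := by
          rw [← zpow_natCast q (n - j - 1), ← zpow_add₀ hqne,
            show (j : ℤ) + 1 - (n : ℤ) + ((n - j - 1 : ℕ) : ℤ) = 0 by push_cast; omega]
          exact zpow_zero q
        rw [neg_mul, hone]
        ring
      have hsum0 : ∑ i ∈ Finset.range (n - j + 1),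
          qBinom q (n - j) i * q ^ Eh i * (-(q ^ ((j : ℤ) + 1 - (n : ℤ)))) ^ i = 0 := by
        rw [hqb, hprod0]
      have hC : ∀ i ∈ Finset.range (n - j + 1),
          (-1 : ℝ) ^ (j + 1 + i) * qBinom q n (j + 1 + i - 1) * qBinom q (j + 1 + i) (j + 1)
            * q ^ ((Eh (j + 1 + i) : ℤ) - ((j + 1 + i : ℕ) : ℤ) * ((n + 1 : ℕ) : ℤ)
                + ((j + 1 + i : ℕ) : ℤ)) / (1 - q ^ (j + 1 + i))
          = ((-1 : ℝ) ^ j * qBinom q n j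
                * (-(q ^ (-(n : ℤ))) * q ^ ((Eh j : ℤ) + (1 - (n : ℤ)) * (j : ℤ))
                  / (1 - q ^ (j + 1))))
              * (qBinom q (n - j) i * q ^ Eh i * (-(q ^ ((j : ℤ) + 1 - (n : ℤ)))) ^ i) := by
        intro i hi
        rw [Finset.mem_range] at hi
        have e1 : j + 1 + i = (j + i) + 1 := by omega
        rw [e1, Nat.add_sub_cancel]
        have h1j := onesub_ne hq0 hq1 (j + 1) (by omega)
        have h1s := onesub_ne hq0 hq1 (j + i + 1) (by omega)
        have habs := qBinom_absorb hq0 hq1 (j + i) j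
        have hB1 : qBinom q (j + i + 1) (j + 1)
            = (1 - q ^ (j + i + 1)) * qBinom q (j + i) j / (1 - q ^ (j + 1)) := by
          field_simp
          linarith
        have hcomp := qBinom_comp hq0 hq1 (show j ≤ j + i by omega) (show j + i ≤ n by omega)
        rw [show j + i - j = i by omega] at hcomp
        have hpow3 : q ^ ((Eh (j + i + 1) : ℤ) - ((j + i + 1 : ℕ) : ℤ) * ((n + 1 : ℕ) : ℤ)
              + ((j + i + 1 : ℕ) : ℤ))
            = q ^ (-(n : ℤ)) * q ^ ((Eh j : ℤ) + (1 - (n : ℤ)) * (j : ℤ))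
                * (q ^ Eh i * (q ^ ((j : ℤ) + 1 - (n : ℤ))) ^ i) := by
          rw [← zpow_natCast q (Eh i), ← zpow_natCast (q ^ ((j : ℤ) + 1 - (n : ℤ))) i,
            ← zpow_mul, ← mul_assoc, ← zpow_add₀ hqne, ← zpow_add₀ hqne, ← zpow_add₀ hqne]
          congr 1
          push_cast [Eh_succ, Eh_add]
          ring
        have hd2 : (-1 : ℝ) ^ (j + i + 1) * qBinom q n (j + i) * qBinom q (j + i + 1) (j + 1)
              * q ^ ((Eh (j + i + 1) : ℤ) - ((j + i + 1 : ℕ) : ℤ) * ((n + 1 : ℕ) : ℤ)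
                + ((j + i + 1 : ℕ) : ℤ)) / (1 - q ^ (j + i + 1))
            = qBinom q n (j + i) * qBinom q (j + i) j
                * ((-1 : ℝ) ^ j * (-1 : ℝ) ^ i
                  * (-(q ^ (-(n : ℤ))) * q ^ ((Eh j : ℤ) + (1 - (n : ℤ)) * (j : ℤ))
                      / (1 - q ^ (j + 1)))
                  * (q ^ Eh i * (q ^ ((j : ℤ) + 1 - (n : ℤ))) ^ i)) := by
          rw [hB1, hpow3]
          field_simp
          ring
        rw [hd2, hcomp, neg_pow]
        ring
      rw [Finset.sum_congr rfl hC, ← Finset.mul_sum, hsum0, mul_zero]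
    rw [hdelta, add_zero]

/-- Prodinger's identity.  The inner chain sum, with largest index `i₁ = r` fixed,
is `q^r/(1-q^r) * dSum q (m-1) r`. -/
theorem prodinger (q : ℝ) (hq0 : 0 < q) (hq1 : q < 1) (n m : ℕ) (hn : 0 < n) (hm : 0 < m) :
    ∑ i ∈ Finset.Icc 1 n, q ^ (i * (m - 1)) / (1 - q ^ i) ^ m =
      ∑ r ∈ Finset.Icc 1 n,
        qBinom q n r * (-1) ^ (r - 1) * q ^ (((r * (r - 1) / 2 : ℕ) : ℤ) - (r : ℤ) * n) *
          (q ^ r / (1 - q ^ r) * dSum q (m - 1) r) := by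
  have hqne : q ≠ 0 := ne_of_gt hq0
  obtain ⟨m', rfl⟩ : ∃ m', m = m' + 1 := ⟨m - 1, by omega⟩
  simp only [Nat.add_sub_cancel, show ∀ r : ℕ, r * (r - 1) / 2 = Eh r from fun _ => rfl]
  symm
  have hR1 : ∀ r ∈ Finset.Icc 1 n,
      qBinom q n r * (-1 : ℝ) ^ (r - 1) * q ^ ((Eh r : ℤ) - (r : ℤ) * (n : ℤ)) *
          (q ^ r / (1 - q ^ r) * dSum q m' r)
        = ∑ k ∈ Finset.Icc 1 r,
            qBinom q n r * (-1 : ℝ) ^ (r - 1) * q ^ ((Eh r : ℤ) - (r : ℤ) * (n : ℤ)) *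
              (q ^ r / (1 - q ^ r) *
                (qBinom q r k * (-1) ^ (k - 1) * q ^ Eh k * (q ^ k / (1 - q ^ k)) ^ m')) := by
    intro r hr
    rw [Finset.mem_Icc] at hr
    rw [dilcher hq0 hq1 m' r hr.1, Finset.mul_sum, Finset.mul_sum]
  rw [Finset.sum_congr rfl hR1, sum_triangle]
  refine Finset.sum_congr rfl fun k hk => ?_
  rw [Finset.mem_Icc] at hk
  obtain ⟨j, rfl⟩ : ∃ j, k = j + 1 := ⟨k - 1, by omega⟩
  have h1k := onesub_ne hq0 hq1 (j + 1) (by omega)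
  have hterm : ∀ r ∈ Finset.Icc (j + 1) n,
      qBinom q n r * (-1 : ℝ) ^ (r - 1) * q ^ ((Eh r : ℤ) - (r : ℤ) * (n : ℤ)) *
          (q ^ r / (1 - q ^ r) *
            (qBinom q r (j + 1) * (-1) ^ (j + 1 - 1) * q ^ Eh (j + 1)
              * (q ^ (j + 1) / (1 - q ^ (j + 1))) ^ m'))
        = (-((-1 : ℝ) ^ j * q ^ Eh (j + 1) * (q ^ (j + 1) / (1 - q ^ (j + 1))) ^ m'))
            * ((-1 : ℝ) ^ r * qBinom q n r * qBinom q r (j + 1)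
              * q ^ ((Eh r : ℤ) - (r : ℤ) * (n : ℤ) + (r : ℤ)) / (1 - q ^ r)) := by
    intro r hr
    rw [Finset.mem_Icc] at hr
    obtain ⟨s, rfl⟩ : ∃ s, r = s + 1 := ⟨r - 1, by omega⟩
    rw [Nat.add_sub_cancel, Nat.add_sub_cancel]
    have hmerge : q ^ ((Eh (s + 1) : ℤ) - ((s + 1 : ℕ) : ℤ) * (n : ℤ) + ((s + 1 : ℕ) : ℤ))
        = q ^ ((Eh (s + 1) : ℤ) - ((s + 1 : ℕ) : ℤ) * (n : ℤ)) * q ^ (s + 1) := by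
      rw [← zpow_natCast q (s + 1), ← zpow_add₀ hqne]
    rw [hmerge, pow_succ]
    ring
  rw [Finset.sum_congr rfl hterm, ← Finset.mul_sum, lemT hq0 hq1 j n hk.2]
  have hsq : (-1 : ℝ) ^ j * (-1) ^ j = 1 := by
    rw [← pow_add, Even.neg_one_pow ⟨j, rfl⟩]
  have hEk : q ^ Eh (j + 1) * q ^ (-(Eh (j + 1) : ℤ)) = 1 := by
    rw [← zpow_natCast q (Eh (j + 1)), ← zpow_add₀ hqne, add_neg_cancel, zpow_zero]
  have hstep : -((-1 : ℝ) ^ j * q ^ Eh (j + 1) * (q ^ (j + 1) / (1 - q ^ (j + 1))) ^ m')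
        * ((-1 : ℝ) ^ (j + 1) * q ^ (-(Eh (j + 1) : ℤ)) / (1 - q ^ (j + 1)))
      = ((-1 : ℝ) ^ j * (-1) ^ j) * (q ^ Eh (j + 1) * q ^ (-(Eh (j + 1) : ℤ)))
        * (q ^ ((j + 1) * m') / ((1 - q ^ (j + 1)) ^ m' * (1 - q ^ (j + 1)))) := by
    rw [div_pow, ← pow_mul]
    have hpne : ((1 : ℝ) - q ^ (j + 1)) ^ m' ≠ 0 := pow_ne_zero _ h1k
    field_simp
    ring
  rw [hstep, hsq, hEk, one_mul, one_mul, pow_succ (1 - q ^ (j + 1)) m']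
end

section
/- For integers 1 ≤ i ≤ n, a nonnegative integer k, and parameters z, q with denominators nonzero: ∑_{r≥0} binom(k+r, k) (1-z)^r h_{k+r}(1/(1-q^i), ..., 1/(1-q^n)) = z^{i-n} [(1-q^i)(q;q)_n (z^{-1}q;q)_i] / [(z-q^i)(z^{-1}q;q)_n (q;q)_i] · h_k(1/(z-q^i), ..., 1/(z-q^n)), whenever the series converges. -/
/-- Complete homogeneous symmetric polynomial `h_k` of the entries of a list. -/
noncomputable def hPoly : List ℝ → ℕ → ℝ
  | _, 0 => 1
  | [], _ + 1 => 0
  | a :: as, k + 1 => a * hPoly (a :: as) k + hPoly as (k + 1)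
termination_by l k => (l.length, k)

/-- The list `[f i, f (i+1), …, f n]`. -/
def varList (f : ℕ → ℝ) (i n : ℕ) : List ℝ := (List.range (n + 1 - i)).map fun j => f (i + j)

lemma hPoly_zero (L : List ℝ) : hPoly L 0 = 1 := by cases L <;> simp [hPoly]
lemma hPoly_nil_succ (m : ℕ) : hPoly [] (m+1) = 0 := by simp [hPoly]
lemma hPoly_cons (a : ℝ) (as : List ℝ) (k : ℕ) :
    hPoly (a :: as) (k+1) = a * hPoly (a :: as) k + hPoly as (k+1) := by simp [hPoly]

open Finset in
lemma hPoly_cons_eq_sum (a : ℝ) (as : List ℝ) (m : ℕ) :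
    hPoly (a :: as) m = ∑ j ∈ range (m+1), a ^ (m - j) * hPoly as j := by
  induction m with
  | zero => simp [hPoly_zero]
  | succ m ih =>
    rw [hPoly_cons, ih, Finset.mul_sum]
    rw [Finset.sum_range_succ (f := fun j => a ^ (m+1-j) * hPoly as j)]
    simp only [Nat.sub_self, pow_zero, one_mul]
    congr 1
    apply Finset.sum_congr rfl
    intro j hj
    rw [← mul_assoc, ← pow_succ']
    congr 2
    simp at hj; omega

lemma choose_le_succ_pow (n : ℕ) : ∀ k : ℕ, n.choose k ≤ (n+1)^k := by
  induction n with
  | zero => intro k; cases k <;> simp [Nat.choose]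
  | succ n ih =>
    intro k
    cases k with
    | zero => simp
    | succ k =>
      rw [Nat.choose_succ_succ]
      calc n.choose k + n.choose (k+1) ≤ (n+1)^k + (n+1)^(k+1) := Nat.add_le_add (ih k) (ih (k+1))
        _ = (n+1)^k * (n+2) := by ring
        _ ≤ (n+2)^k * (n+2) := Nat.mul_le_mul_right _ (Nat.pow_le_pow_left (by omega) k)
        _ = (n+2)^(k+1) := by ring

lemma abs_hPoly_le (M : ℝ) (hM : 0 ≤ M) :
    ∀ (L : List ℝ), (∀ x ∈ L, |x| ≤ M) → ∀ m : ℕ,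
      |hPoly L m| ≤ ((m + L.length).choose L.length : ℝ) * M ^ m := by
  intro L
  induction L with
  | nil =>
    intro _ m
    cases m with
    | zero => simp [hPoly_zero]
    | succ m => simp [hPoly_nil_succ]; positivity
  | cons a as ih =>
    intro hx
    have ha : |a| ≤ M := hx a (by simp)
    have has : ∀ x ∈ as, |x| ≤ M := fun x hxx => hx x (by simp [hxx])
    intro m
    induction m with
    | zero => simp [hPoly_zero]
    | succ m ihm =>
      rw [hPoly_cons]
      have e1 : |a * hPoly (a :: as) m + hPoly as (m+1)|
          ≤ |a| * |hPoly (a :: as) m| + |hPoly as (m+1)| := by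
        refine (abs_add_le _ _).trans ?_; rw [abs_mul]
      have e2 : |a| * |hPoly (a :: as) m|
          ≤ M * (((m + (a :: as).length).choose (a :: as).length : ℝ) * M ^ m) :=
        mul_le_mul ha ihm (abs_nonneg _) hM
      have e3 : |hPoly as (m+1)| ≤ ((m + 1 + as.length).choose as.length : ℝ) * M ^ (m+1) :=
        ih has (m+1)
      refine (e1.trans (add_le_add e2 e3)).trans (le_of_eq ?_)
      simp only [List.length_cons]
      rw [show m + 1 + (as.length + 1) = (m + (as.length + 1)) + 1 from by omega,
        Nat.choose_succ_succ (m + (as.length + 1)) as.length,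
        show m + 1 + as.length = m + (as.length + 1) from by omega]
      push_cast
      ring

-- foldr max lemmas
def lmax (L : List ℝ) : ℝ := (L.map fun x => |x|).foldr max 0
lemma lmax_nonneg (L : List ℝ) : 0 ≤ lmax L := by
  induction L with
  | nil => simp [lmax]
  | cons a as ih => simp only [lmax, List.map_cons, List.foldr_cons] at *; exact le_max_of_le_right ih
lemma le_lmax (L : List ℝ) : ∀ x ∈ L, |x| ≤ lmax L := by
  induction L with
  | nil => simp
  | cons a as ih =>
    intro x hx
    rcases List.mem_cons.1 hx with h | h
    · subst h; exact le_max_left _ _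
    · exact le_trans (ih x h) (le_max_right _ _)
lemma lmax_mul_lt (L : List ℝ) (t : ℝ) (h : ∀ x ∈ L, |x * t| < 1) : lmax L * |t| < 1 := by
  induction L with
  | nil => simp [lmax]
  | cons a as ih =>
    have h1 : |a| * |t| < 1 := by rw [← abs_mul]; exact h a (by simp)
    have h2 : lmax as * |t| < 1 := ih fun x hx => h x (by simp [hx])
    simp only [lmax, List.map_cons, List.foldr_cons]
    rw [max_mul_of_nonneg _ _ (abs_nonneg t)]
    exact max_lt h1 h2

set_option maxHeartbeats 1000000 in
open Filter in
lemma master_abs (t : ℝ) (L : List ℝ) (hlt : ∀ x ∈ L, |x * t| < 1) (c₁ c₂ c₃ : ℕ) :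
    Summable (fun r : ℕ => |((c₁ + r).choose c₂ : ℝ) * t ^ r * hPoly L (c₃ + r)|) := by
  set p := L.length with hp
  set M : ℝ := lmax L with hM
  have hM0 : 0 ≤ M := lmax_nonneg L
  have hMt : M * |t| < 1 := lmax_mul_lt L t hlt
  have hMt0 : 0 ≤ M * |t| := mul_nonneg hM0 (abs_nonneg t)
  set ρ : ℝ := max (M * |t|) (1/2) with hρ
  have hρ1 : ρ < 1 := max_lt hMt (by norm_num)
  have hρ0 : 0 < ρ := lt_of_lt_of_le (by norm_num) (le_max_right _ _)
  set E : ℕ := c₂ + p with hE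
  set K : ℝ := ((c₁+1):ℝ)^c₂ * ((c₃+p+1):ℝ)^p * M^c₃ with hK
  have key : ∀ r : ℕ, |((c₁ + r).choose c₂ : ℝ) * t ^ r * hPoly L (c₃ + r)|
      ≤ K * ((r+1:ℝ)^E * ρ^r) := by
    intro r
    have b1 : ((c₁ + r).choose c₂ : ℝ) ≤ ((c₁+1):ℝ)^c₂ * (r+1:ℝ)^c₂ := by
      have h1 : (c₁ + r).choose c₂ ≤ (c₁ + r + 1)^c₂ := choose_le_succ_pow _ _
      have h2 : (c₁ + r + 1)^c₂ ≤ ((c₁+1) * (r+1))^c₂ :=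
        Nat.pow_le_pow_left (by nlinarith) c₂
      calc ((c₁ + r).choose c₂ : ℝ) ≤ (((c₁+1) * (r+1))^c₂ : ℕ) := by
            exact_mod_cast h1.trans h2
        _ = ((c₁+1):ℝ)^c₂ * (r+1:ℝ)^c₂ := by
            rw [Nat.cast_pow, Nat.cast_mul, mul_pow]; push_cast; ring
    have b2 : |hPoly L (c₃ + r)| ≤ ((c₃+p+1):ℝ)^p * (r+1:ℝ)^p * M^(c₃+r) := by
      have h1 := abs_hPoly_le M hM0 L (le_lmax L) (c₃ + r)
      refine h1.trans ?_
      have h2 : (c₃ + r + p).choose p ≤ ((c₃+p+1) * (r+1))^p := by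
        refine (choose_le_succ_pow _ _).trans (Nat.pow_le_pow_left (by nlinarith) p)
      have h3 : ((c₃ + r + p).choose p : ℝ) ≤ ((c₃+p+1):ℝ)^p * (r+1:ℝ)^p := by
        calc ((c₃ + r + p).choose p : ℝ) ≤ (((c₃+p+1) * (r+1))^p : ℕ) := by exact_mod_cast h2
          _ = ((c₃+p+1):ℝ)^p * (r+1:ℝ)^p := by
            rw [Nat.cast_pow, Nat.cast_mul, mul_pow]; push_cast; ring
      exact mul_le_mul_of_nonneg_right h3 (pow_nonneg hM0 _)
    calc |((c₁ + r).choose c₂ : ℝ) * t ^ r * hPoly L (c₃ + r)|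
        = ((c₁ + r).choose c₂ : ℝ) * |t| ^ r * |hPoly L (c₃ + r)| := by
          rw [abs_mul, abs_mul, Nat.abs_cast, abs_pow]
      _ ≤ (((c₁+1):ℝ)^c₂ * (r+1:ℝ)^c₂) * |t| ^ r * (((c₃+p+1):ℝ)^p * (r+1:ℝ)^p * M^(c₃+r)) := by
          have := mul_le_mul (mul_le_mul_of_nonneg_right b1 (pow_nonneg (abs_nonneg t) r)) b2
            (abs_nonneg _) (by positivity)
          exact this
      _ = K * ((r+1:ℝ)^E * (M*|t|)^r) := by
          rw [hK, hE, pow_add, pow_add, mul_pow]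
          ring
      _ ≤ K * ((r+1:ℝ)^E * ρ^r) := by
          have hK0 : 0 ≤ K := by positivity
          gcongr
          exact le_max_left _ _
  have base : Summable (fun n : ℕ => (n:ℝ)^E * ρ^n) :=
    summable_pow_mul_geometric_of_norm_lt_one E (by rw [Real.norm_eq_abs, abs_of_pos hρ0]; exact hρ1)
  have base1 : Summable (fun n : ℕ => ((n+1:ℕ):ℝ)^E * ρ^(n+1)) :=
    (summable_nat_add_iff 1).2 base
  have base2 : Summable (fun n : ℕ => (n+1:ℝ)^E * ρ^n) := by
    have := base1.mul_left ρ⁻¹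
    refine this.congr fun n => ?_
    push_cast
    field_simp
    ring
  refine Summable.of_nonneg_of_le (fun r => abs_nonneg _) key (base2.mul_left K)

lemma master (t : ℝ) (L : List ℝ) (hlt : ∀ x ∈ L, |x * t| < 1) (c₁ c₂ c₃ : ℕ) :
    Summable (fun r : ℕ => ((c₁ + r).choose c₂ : ℝ) * t ^ r * hPoly L (c₃ + r)) :=
  (master_abs t L hlt c₁ c₂ c₃).of_abs

lemma summable_abs_hPoly_geom (s : ℝ) (L : List ℝ) (h : ∀ x ∈ L, |x * s| < 1) :
    Summable (fun m : ℕ => |hPoly L m * s ^ m|) := by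
  have := master_abs s L h 0 0 0
  refine this.congr fun m => ?_
  simp [abs_mul, mul_comm]

open Finset in
lemma hasSum_hPoly_geom (s : ℝ) : ∀ (L : List ℝ), (∀ x ∈ L, |x * s| < 1) →
    HasSum (fun m : ℕ => hPoly L m * s ^ m) ((L.map fun x => (1 - x * s)⁻¹).prod) := by
  intro L
  induction L with
  | nil =>
    intro _
    simp only [List.map_nil, List.prod_nil]
    have : (fun m : ℕ => hPoly [] m * s ^ m) = fun m => if m = 0 then 1 else 0 := by
      funext m
      cases m with
      | zero => simp [hPoly_zero]
      | succ m => simp [hPoly_nil_succ]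
    rw [this]
    simpa using hasSum_ite_eq (0 : ℕ) (1 : ℝ)
  | cons a as ih =>
    intro h
    have ha : |a * s| < 1 := h a (by simp)
    have has : ∀ x ∈ as, |x * s| < 1 := fun x hx => h x (by simp [hx])
    have hf : Summable (fun m : ℕ => ‖(a*s) ^ m‖) := by
      have h0 := summable_geometric_of_abs_lt_one (r := |a*s|) (by rwa [abs_abs])
      exact h0.congr fun m => by rw [Real.norm_eq_abs, abs_pow]
    have hg : Summable (fun m : ℕ => ‖hPoly as m * s ^ m‖) := by
      exact (summable_abs_hPoly_geom s as has).congr fun m => (Real.norm_eq_abs _).symm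
    have hsum3 : Summable (fun n : ℕ => hPoly (a :: as) n * s ^ n) := by
      refine (master s (a :: as) h 0 0 0).congr fun m => ?_
      simp [mul_comm]
    have hn : ∀ n : ℕ, ∑ kl ∈ antidiagonal n, (a*s)^kl.1 * (hPoly as kl.2 * s^kl.2)
        = hPoly (a :: as) n * s ^ n := by
      intro n
      rw [Finset.Nat.sum_antidiagonal_eq_sum_range_succ_mk, hPoly_cons_eq_sum, Finset.sum_mul,
        ← Finset.sum_range_reflect (fun j => a ^ (n - j) * hPoly as j * s ^ n) (n+1)]
      apply Finset.sum_congr rfl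
      intro k hk
      simp only [Finset.mem_range] at hk
      have hk' : k ≤ n := by omega
      rw [show n + 1 - 1 - k = n - k from by omega, show n - (n - k) = k from by omega, mul_pow]
      have hss : s ^ k * s ^ (n - k) = s ^ n := by rw [← pow_add]; congr 1; omega
      calc a^k * s^k * (hPoly as (n-k) * s^(n-k))
          = a^k * hPoly as (n-k) * (s^k * s^(n-k)) := by ring
        _ = a^k * hPoly as (n-k) * s^n := by rw [hss]
    have key : ((a :: as).map fun x => (1 - x * s)⁻¹).prod
        = ∑' n : ℕ, hPoly (a :: as) n * s ^ n := by
      calc ((a :: as).map fun x => (1 - x * s)⁻¹).prod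
          = (1 - a*s)⁻¹ * ((as.map fun x => (1 - x * s)⁻¹).prod) := by simp
        _ = (∑' m : ℕ, (a*s)^m) * (∑' m : ℕ, hPoly as m * s^m) := by
            rw [(hasSum_geometric_of_abs_lt_one ha).tsum_eq, (ih has).tsum_eq]
        _ = ∑' n : ℕ, ∑ kl ∈ antidiagonal n, (a*s)^kl.1 * (hPoly as kl.2 * s^kl.2) :=
            tsum_mul_tsum_eq_tsum_sum_antidiagonal_of_summable_norm hf hg
        _ = ∑' n : ℕ, hPoly (a :: as) n * s ^ n := tsum_congr hn
    exact hsum3.hasSum_iff.2 key.symm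

open Filter Finset in
lemma head_lt (a : ℝ) (as : List ℝ) (t : ℝ) (ht : t ≠ 0)
    (h0 : Tendsto (fun m : ℕ => hPoly (a :: as) m * t ^ m) atTop (nhds 0))
    (has : ∀ x ∈ as, |x * t| < 1) : |a * t| < 1 := by
  by_contra hge
  push_neg at hge
  have ha : a ≠ 0 := by
    intro h; rw [h] at hge; simp at hge; linarith
  have hat : (1:ℝ) ≤ |a * t| := hge
  have hinv : ∀ x ∈ as, |x * a⁻¹| < 1 := by
    intro x hx
    have hxa : x * a⁻¹ = (x * t) / (a * t) := by field_simp
    rw [hxa, abs_div]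
    calc |x * t| / |a * t| ≤ |x * t| / 1 := by
          apply div_le_div_of_nonneg_left (abs_nonneg _) one_pos hat |>.trans_eq rfl
      _ = |x * t| := div_one _
      _ < 1 := has x hx
  set c : ℝ := (as.map fun x => (1 - x * a⁻¹)⁻¹).prod with hcdef
  have hsum : HasSum (fun j : ℕ => hPoly as j * (a⁻¹) ^ j) c := hasSum_hPoly_geom a⁻¹ as hinv
  have hc : c ≠ 0 := by
    apply List.prod_ne_zero
    intro hmem
    obtain ⟨x, hx, hx0⟩ := List.mem_map.1 hmem
    have hne : 1 - x * a⁻¹ ≠ 0 := by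
      intro h
      have h1 : x * a⁻¹ = 1 := by linarith
      have h2 := hinv x hx
      rw [h1] at h2
      simp at h2
    exact hne (inv_eq_zero.1 hx0)
  have hQ : Tendsto (fun m : ℕ => ∑ j ∈ range (m+1), hPoly as j * (a⁻¹) ^ j) atTop (nhds c) :=
    (Filter.tendsto_add_atTop_iff_nat 1).2 hsum.tendsto_sum_nat
  have hkey : ∀ m : ℕ, hPoly (a :: as) m * t ^ m
      = (a*t)^m * ∑ j ∈ range (m+1), hPoly as j * (a⁻¹) ^ j := by
    intro m
    rw [hPoly_cons_eq_sum, Finset.sum_mul, Finset.mul_sum]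
    apply Finset.sum_congr rfl
    intro j hj
    simp only [Finset.mem_range] at hj
    have hj' : j ≤ m := by omega
    have hpow : a ^ (m - j) * a ^ j = a ^ m := by rw [← pow_add]; congr 1; omega
    have haj : a ^ j ≠ 0 := pow_ne_zero _ ha
    rw [mul_pow, inv_pow]
    field_simp
    rw [← hpow]; ring
  have hle : ∀ m : ℕ, |∑ j ∈ range (m+1), hPoly as j * (a⁻¹) ^ j|
      ≤ |hPoly (a :: as) m * t ^ m| := by
    intro m
    rw [hkey m, abs_mul, abs_pow]
    have h1 : (1:ℝ) ≤ |a*t|^m := one_le_pow₀ hat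
    nlinarith [abs_nonneg (∑ j ∈ range (m+1), hPoly as j * (a⁻¹) ^ j)]
  have habs : |c| ≤ 0 := by
    have l1 : Tendsto (fun m : ℕ => |∑ j ∈ range (m+1), hPoly as j * (a⁻¹) ^ j|) atTop (nhds |c|) := hQ.abs
    have l2 : Tendsto (fun m : ℕ => |hPoly (a :: as) m * t ^ m|) atTop (nhds (0:ℝ)) := by
      simpa using h0.abs
    exact le_of_tendsto_of_tendsto' l1 l2 hle
  exact hc (abs_eq_zero.1 (le_antisymm habs (abs_nonneg _)))

open Filter in
lemma all_abs_lt (t : ℝ) : ∀ (L : List ℝ),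
    Tendsto (fun m : ℕ => hPoly L m * t ^ m) atTop (nhds 0) → ∀ x ∈ L, |x * t| < 1 := by
  intro L
  induction L with
  | nil => intro _ x hx; simp at hx
  | cons a as ih =>
    intro h0 x hx
    rcases eq_or_ne t 0 with rfl | ht
    · simp
    have htail : Tendsto (fun m : ℕ => hPoly as m * t ^ m) atTop (nhds 0) := by
      have h1 : Tendsto (fun m : ℕ => hPoly as (m+1) * t ^ (m+1)) atTop (nhds 0) := by
        have heq : (fun m : ℕ => hPoly as (m+1) * t ^ (m+1))
            = fun m => (hPoly (a :: as) (m+1) * t ^ (m+1)) - (a*t) * (hPoly (a :: as) m * t ^ m) := by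
          funext m; rw [hPoly_cons]; ring
        rw [heq]
        have hshift : Tendsto (fun m : ℕ => hPoly (a :: as) (m+1) * t ^ (m+1)) atTop (nhds 0) :=
          (Filter.tendsto_add_atTop_iff_nat 1).2 h0
        simpa using hshift.sub (h0.const_mul (a*t))
      exact (Filter.tendsto_add_atTop_iff_nat 1).1 h1
    rcases List.mem_cons.1 hx with rfl | hx'
    · exact head_lt x as t ht h0 (ih htail)
    · exact ih htail x hx'

lemma nil_case (t : ℝ) (k : ℕ) :
    ∑' r : ℕ, ((k + r).choose k : ℝ) * t ^ r * hPoly [] (k + r)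
      = (([] : List ℝ).map fun x => (1 - x * t)⁻¹).prod
        * hPoly (([] : List ℝ).map fun x => x / (1 - x * t)) k := by
  simp only [List.map_nil, List.prod_nil, one_mul]
  cases k with
  | zero =>
    rw [tsum_eq_single 0 ?_]
    · simp [hPoly_zero]
    · intro r hr
      obtain ⟨m, rfl⟩ := Nat.exists_eq_succ_of_ne_zero hr
      rw [show 0 + (m+1) = m+1 from by omega, hPoly_nil_succ]
      ring
  | succ k' =>
    have hz : ∀ r : ℕ, (((k'+1) + r).choose (k'+1) : ℝ) * t ^ r * hPoly [] ((k'+1) + r) = 0 := by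
      intro r
      rw [show (k'+1) + r = (k'+r) + 1 from by omega, hPoly_nil_succ]
      ring
    rw [tsum_congr hz, tsum_zero, hPoly_nil_succ]

lemma main_sum (t : ℝ) : ∀ (N k : ℕ) (L : List ℝ), k + L.length ≤ N → (∀ x ∈ L, |x * t| < 1) →
    ∑' r : ℕ, ((k + r).choose k : ℝ) * t ^ r * hPoly L (k + r)
      = (L.map fun x => (1 - x * t)⁻¹).prod * hPoly (L.map fun x => x / (1 - x * t)) k := by
  intro N
  induction N with
  | zero =>
    intro k L hN hlt
    have hL : L = [] := List.eq_nil_of_length_eq_zero (by omega)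
    subst hL
    exact nil_case t k
  | succ N ih =>
    intro k L hN hlt
    cases L with
    | nil => exact nil_case t k
    | cons a as =>
      have hlt' : ∀ x ∈ as, |x * t| < 1 := fun x hx => hlt x (by simp [hx])
      have hat : |a * t| < 1 := hlt a (by simp)
      have h1at : 1 - a * t ≠ 0 := by
        have := (abs_lt.1 hat).2
        intro h; linarith
      cases k with
      | zero =>
        have hfun : ∀ r : ℕ, ((0 + r).choose 0 : ℝ) * t ^ r * hPoly (a :: as) (0 + r)
            = t ^ r * hPoly (a :: as) r := by
          intro r; rw [Nat.choose_zero_right, Nat.zero_add]; push_cast; ring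
        have hS' : Summable (fun r : ℕ => t ^ r * hPoly (a :: as) r) :=
          (master t (a :: as) hlt 0 0 0).congr hfun
        have s2 : Summable (fun r : ℕ => t ^ r * hPoly as (r + 1)) := by
          refine (master t as hlt' 0 0 1).congr fun r => ?_
          rw [Nat.choose_zero_right, show 1 + r = r + 1 from by omega]; push_cast; ring
        have sas : Summable (fun r : ℕ => t ^ r * hPoly as r) := by
          refine (master t as hlt' 0 0 0).congr fun r => ?_
          rw [Nat.choose_zero_right, Nat.zero_add]; push_cast; ring
        rw [tsum_congr hfun]
        set S := ∑' r : ℕ, t ^ r * hPoly (a :: as) r with hSdef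
        have e1 : S = 1 + ∑' r : ℕ, t ^ (r+1) * hPoly (a :: as) (r+1) := by
          rw [hSdef, Summable.tsum_eq_zero_add hS']
          simp [hPoly_zero]
        have e2 : ∑' r : ℕ, t ^ (r+1) * hPoly (a :: as) (r+1)
            = (a*t) * S + t * ∑' r : ℕ, t ^ r * hPoly as (r+1) := by
          rw [hSdef, ← tsum_mul_left, ← tsum_mul_left,
            ← Summable.tsum_add (hS'.mul_left (a*t)) (s2.mul_left t)]
          apply tsum_congr
          intro r
          rw [hPoly_cons]
          ring
        have e3 : ∑' r : ℕ, t ^ r * hPoly as r = 1 + t * ∑' r : ℕ, t ^ r * hPoly as (r+1) := by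
          rw [Summable.tsum_eq_zero_add sas, ← tsum_mul_left]
          congr 1
          · simp [hPoly_zero]
          · apply tsum_congr; intro r; ring
        have e4 : ∑' r : ℕ, t ^ r * hPoly as r
            = (as.map fun x => (1 - x * t)⁻¹).prod := by
          have := ih 0 as (by simp at hN ⊢; omega) hlt'
          rw [tsum_congr (fun r => by
            rw [Nat.choose_zero_right, Nat.zero_add]; push_cast; ring :
            ∀ r : ℕ, ((0 + r).choose 0 : ℝ) * t ^ r * hPoly as (0 + r) = t ^ r * hPoly as r)] at this
          rw [this, hPoly_zero, mul_one]
        have heq : S = (a*t) * S + (as.map fun x => (1 - x * t)⁻¹).prod := by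
          have hP : (as.map fun x => (1 - x * t)⁻¹).prod
              = 1 + t * ∑' r : ℕ, t ^ r * hPoly as (r+1) := by rw [← e4, e3]
          conv_lhs => rw [e1, e2]
          rw [hP]
          ring
        have hfin : S = (1 - a*t)⁻¹ * (as.map fun x => (1 - x * t)⁻¹).prod := by
          rw [eq_inv_mul_iff_mul_eq₀ h1at]
          linear_combination heq
        rw [hfin]
        simp [hPoly_zero]
      | succ k' =>
        -- abbreviations
        have hsplit : ∀ r : ℕ, hPoly (a :: as) (k' + 1 + r)
            = a * hPoly (a :: as) (k' + r) + hPoly as (k' + 1 + r) := by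
          intro r
          rw [show k' + 1 + r = (k' + r) + 1 from by omega]
          exact hPoly_cons a as (k' + r)
        have mA : Summable (fun r : ℕ => ((k'+1+r).choose (k'+1) : ℝ) * t ^ r
            * (a * hPoly (a :: as) (k'+r))) := by
          refine ((master t (a :: as) hlt (k'+1) (k'+1) k').mul_left a).congr fun r => ?_
          ring
        have mB : Summable (fun r : ℕ => ((k'+1+r).choose (k'+1) : ℝ) * t ^ r
            * hPoly as (k'+1+r)) := master t as hlt' (k'+1) (k'+1) (k'+1)
        have mS' : Summable (fun r : ℕ => ((k'+r).choose k' : ℝ) * t ^ r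
            * hPoly (a :: as) (k'+r)) := master t (a :: as) hlt k' k' k'
        have mU : Summable (fun r : ℕ => ((k'+r).choose (k'+1) : ℝ) * t ^ r
            * hPoly (a :: as) (k'+r)) := master t (a :: as) hlt k' (k'+1) k'
        set S := ∑' r : ℕ, ((k'+1+r).choose (k'+1) : ℝ) * t ^ r * hPoly (a :: as) (k'+1+r)
          with hSdef
        have e1 : S = (∑' r : ℕ, ((k'+1+r).choose (k'+1) : ℝ) * t ^ r
              * (a * hPoly (a :: as) (k'+r)))
            + ∑' r : ℕ, ((k'+1+r).choose (k'+1) : ℝ) * t ^ r * hPoly as (k'+1+r) := by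
          rw [hSdef, ← Summable.tsum_add mA mB]
          apply tsum_congr
          intro r
          rw [hsplit r]
          ring
        have e2 : (∑' r : ℕ, ((k'+1+r).choose (k'+1) : ℝ) * t ^ r
              * (a * hPoly (a :: as) (k'+r)))
            = a * ∑' r : ℕ, ((k'+1+r).choose (k'+1) : ℝ) * t ^ r * hPoly (a :: as) (k'+r) := by
          rw [← tsum_mul_left]
          apply tsum_congr; intro r; ring
        have e3 : (∑' r : ℕ, ((k'+1+r).choose (k'+1) : ℝ) * t ^ r * hPoly (a :: as) (k'+r))
            = (∑' r : ℕ, ((k'+r).choose k' : ℝ) * t ^ r * hPoly (a :: as) (k'+r))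
              + ∑' r : ℕ, ((k'+r).choose (k'+1) : ℝ) * t ^ r * hPoly (a :: as) (k'+r) := by
          rw [← Summable.tsum_add mS' mU]
          apply tsum_congr
          intro r
          have hch : ((k'+1+r).choose (k'+1) : ℝ)
              = ((k'+r).choose k' : ℝ) + ((k'+r).choose (k'+1) : ℝ) := by
            rw [show k'+1+r = (k'+r)+1 from by omega]
            exact_mod_cast congrArg Nat.cast (Nat.choose_succ_succ (k'+r) k')
          rw [hch]; ring
        have e4 : (∑' r : ℕ, ((k'+r).choose (k'+1) : ℝ) * t ^ r * hPoly (a :: as) (k'+r))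
            = t * S := by
          rw [Summable.tsum_eq_zero_add mU]
          have h0 : ((k'+0).choose (k'+1) : ℝ) * t ^ 0 * hPoly (a :: as) (k'+0) = 0 := by
            rw [Nat.add_zero, Nat.choose_eq_zero_of_lt (by omega)]
            simp
          rw [h0, zero_add, hSdef, ← tsum_mul_left]
          apply tsum_congr
          intro r
          rw [show k' + (r+1) = k' + 1 + r from by omega]
          ring
        have eB : (∑' r : ℕ, ((k'+1+r).choose (k'+1) : ℝ) * t ^ r * hPoly as (k'+1+r))
            = (as.map fun x => (1 - x * t)⁻¹).prod
              * hPoly (as.map fun x => x / (1 - x * t)) (k'+1) := by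
          exact ih (k'+1) as (by simp at hN ⊢; omega) hlt'
        have eS' : (∑' r : ℕ, ((k'+r).choose k' : ℝ) * t ^ r * hPoly (a :: as) (k'+r))
            = ((a :: as).map fun x => (1 - x * t)⁻¹).prod
              * hPoly ((a :: as).map fun x => x / (1 - x * t)) k' := by
          exact ih k' (a :: as) (by simp at hN ⊢; omega) hlt
        set P1 := ((a :: as).map fun x => (1 - x * t)⁻¹).prod
          * hPoly ((a :: as).map fun x => x / (1 - x * t)) k' with hP1
        set P2 := (as.map fun x => (1 - x * t)⁻¹).prod
          * hPoly (as.map fun x => x / (1 - x * t)) (k'+1) with hP2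
        have heq : S = a * (P1 + t * S) + P2 := by
          conv_lhs => rw [e1]
          rw [e2, e3, e4, eB, eS']
        have hfin : S = (1 - a*t)⁻¹ * (a * P1 + P2) := by
          rw [eq_inv_mul_iff_mul_eq₀ h1at]
          linear_combination heq
        rw [hfin, hP1, hP2]
        simp only [List.map_cons, List.prod_cons, hPoly_cons]
        field_simp

open Finset Filter in
/-- The dual form (3.2) of Lemma 3.1. -/
theorem lemma31_dual (q z : ℝ) (i n k : ℕ) (hi : 1 ≤ i) (hin : i ≤ n) (hz : z ≠ 0)
    (hden1 : ∀ j : ℕ, 1 ≤ j → 1 - q ^ j ≠ 0)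
    (hden2 : ∀ j : ℕ, 1 ≤ j → z - q ^ j ≠ 0)
    (hden3 : ∀ j : ℕ, 1 ≤ j → 1 - z⁻¹ * q ^ j ≠ 0)
    (hs : Summable fun r : ℕ =>
      ((k + r).choose k : ℝ) * (1 - z) ^ r *
        hPoly (varList (fun j => 1 / (1 - q ^ j)) i n) (k + r)) :
    (∑' r : ℕ, ((k + r).choose k : ℝ) * (1 - z) ^ r *
        hPoly (varList (fun j => 1 / (1 - q ^ j)) i n) (k + r)) =
      z ^ ((i : ℤ) - (n : ℤ)) *
          ((1 - q ^ i) * qPoch q q n * qPoch q (z⁻¹ * q) i /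
            ((z - q ^ i) * qPoch q (z⁻¹ * q) n * qPoch q q i)) *
        hPoly (varList (fun j => 1 / (z - q ^ j)) i n) k := by
  obtain ⟨d, rfl⟩ : ∃ d, n = i + d := ⟨n - i, by omega⟩
  set t : ℝ := 1 - z with htdef
  set L : List ℝ := varList (fun j => 1 / (1 - q ^ j)) i (i + d) with hLdef
  -- Step 0: from summability derive |x*t| < 1 for all entries
  have hterms : Tendsto (fun r : ℕ => ((k + r).choose k : ℝ) * t ^ r * hPoly L (k + r))
      atTop (nhds 0) := hs.tendsto_atTop_zero
  have h0 : Tendsto (fun m : ℕ => hPoly L m * t ^ m) atTop (nhds 0) := by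
    rw [← Filter.tendsto_add_atTop_iff_nat k]
    apply squeeze_zero_norm
      (a := fun r : ℕ => |t|^k * |((k + r).choose k : ℝ) * t ^ r * hPoly L (k + r)|)
    · intro r
      have hC : (1:ℝ) ≤ ((k + r).choose k : ℝ) := by
        exact_mod_cast Nat.one_le_iff_ne_zero.2 (Nat.choose_pos (Nat.le_add_right k r)).ne'
      rw [Real.norm_eq_abs, show r + k = k + r from by omega, abs_mul, abs_pow, pow_add,
        abs_mul, abs_mul, Nat.abs_cast, abs_pow]
      have h1 : (0:ℝ) ≤ |t|^k := pow_nonneg (abs_nonneg t) k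
      have h2 : (0:ℝ) ≤ |t|^r := pow_nonneg (abs_nonneg t) r
      have h3 : (0:ℝ) ≤ |hPoly L (k+r)| := abs_nonneg _
      nlinarith [mul_le_mul_of_nonneg_right hC (mul_nonneg (mul_nonneg h1 h2) h3)]
    · have := (hterms.abs).const_mul (|t|^k)
      simpa using this
  have hall : ∀ x ∈ L, |x * t| < 1 := all_abs_lt t L h0
  have hmain := main_sum t (k + L.length) k L le_rfl hall
  rw [hmain]
  -- index set facts
  have hrange : i + d + 1 - i = d + 1 := by omega
  have hij : ∀ j : ℕ, 1 ≤ i + j := fun j => by omega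
  -- the mapped list equality
  have hmap : L.map (fun x => x / (1 - x * t)) = varList (fun j => 1 / (z - q ^ j)) i (i + d) := by
    simp only [hLdef, varList, List.map_map, hrange]
    congr 1
    funext j
    have h1 : 1 - q ^ (i + j) ≠ 0 := hden1 _ (hij j)
    have h2 : z - q ^ (i + j) ≠ 0 := hden2 _ (hij j)
    have h3 : 1 - 1 / (1 - q ^ (i + j)) * t = (z - q ^ (i + j)) / (1 - q ^ (i + j)) := by
      rw [htdef]; field_simp; ring
    simp only [Function.comp]
    rw [h3]
    field_simp
  have hLprod : (L.map fun x => (1 - x * t)⁻¹).prod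
      = ∏ j ∈ Finset.range (d + 1), ((1 - q ^ (i + j)) / (z - q ^ (i + j))) := by
    simp only [hLdef, varList, List.map_map, hrange]
    have hl : ∀ g : ℕ → ℝ, ((List.range (d+1)).map g).prod = ∏ j ∈ Finset.range (d+1), g j :=
      fun g => rfl
    rw [hl]
    apply Finset.prod_congr rfl
    intro j _
    have h1 : 1 - q ^ (i + j) ≠ 0 := hden1 _ (hij j)
    have h2 : z - q ^ (i + j) ≠ 0 := hden2 _ (hij j)
    have h3 : 1 - 1 / (1 - q ^ (i + j)) * t = (z - q ^ (i + j)) / (1 - q ^ (i + j)) := by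
      rw [htdef]; field_simp; ring
    simp only [Function.comp]
    rw [h3, inv_div]
  rw [hmap, hLprod]
  -- prefactor identity
  have hq : ∀ m : ℕ, qPoch q q m = ∏ j ∈ Finset.range m, (1 - q ^ (j+1)) := by
    intro m
    apply Finset.prod_congr rfl
    intro j _
    rw [← pow_succ']
  have hzp : ∀ m : ℕ, qPoch q (z⁻¹ * q) m = (∏ j ∈ Finset.range m, (z - q ^ (j+1))) / z ^ m := by
    intro m
    unfold qPoch
    have hc : ∀ j ∈ Finset.range m, 1 - z⁻¹ * q * q ^ j = (z - q ^ (j+1)) / z := by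
      intro j _
      field_simp
      ring
    rw [Finset.prod_congr rfl hc, Finset.prod_div_distrib, Finset.prod_const, Finset.card_range]
  have hsplitA := Finset.prod_range_add (fun j => 1 - q ^ (j+1)) i d
  have hsplitB := Finset.prod_range_add (fun j => z - q ^ (j+1)) i d
  have hAi : (∏ j ∈ Finset.range i, (1 - q ^ (j+1))) ≠ 0 :=
    Finset.prod_ne_zero_iff.2 fun j _ => hden1 (j+1) (by omega)
  have hBi : (∏ j ∈ Finset.range i, (z - q ^ (j+1))) ≠ 0 :=
    Finset.prod_ne_zero_iff.2 fun j _ => hden2 (j+1) (by omega)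
  have hC1ne : (∏ j ∈ Finset.range d, (1 - q ^ (i+j+1))) ≠ 0 :=
    Finset.prod_ne_zero_iff.2 fun j _ => hden1 (i+j+1) (by omega)
  have hC2ne : (∏ j ∈ Finset.range d, (z - q ^ (i+j+1))) ≠ 0 :=
    Finset.prod_ne_zero_iff.2 fun j _ => hden2 (i+j+1) (by omega)
  have h1i : 1 - q ^ i ≠ 0 := hden1 i hi
  have h2i : z - q ^ i ≠ 0 := hden2 i hi
  have hzi : z ^ i ≠ 0 := pow_ne_zero _ hz
  have hzn : z ^ (i + d) ≠ 0 := pow_ne_zero _ hz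
  have hLHS : ∏ j ∈ Finset.range (d + 1), ((1 - q ^ (i + j)) / (z - q ^ (i + j)))
      = ((∏ j ∈ Finset.range d, (1 - q ^ (i+j+1))) / (∏ j ∈ Finset.range d, (z - q ^ (i+j+1))))
        * ((1 - q ^ i) / (z - q ^ i)) := by
    rw [Finset.prod_range_succ' (fun j => (1 - q ^ (i + j)) / (z - q ^ (i + j))) d]
    rw [← Finset.prod_div_distrib]
    congr 1
  have hcongr : hPoly (varList (fun j => 1 / (z - q ^ j)) i (i + d)) k
      = hPoly (varList (fun j => 1 / (z - q ^ j)) i (i + d)) k := rfl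
  congr 1
  rw [hLHS, hq, hq, hzp, hzp, hsplitA, hsplitB]
  rw [zpow_sub₀ hz, zpow_natCast, zpow_natCast]
  field_simp
end
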